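/- Assume L is nonresonant in the mixed space X_{M2,T} with Green's function G_{M2}[T], and L̃ is nonresonant in the Dirichlet space X_{D,2T} with Green's function G_D[2T]. Then G_{M2}[T](t,s) = G_D[2T](t,s) + G_D[2T](2T − t, s) for all (t,s) ∈ I × I. -/
import Mathlib


open MeasureTheory Set

/-- `u` belongs to the space `W^{m,1}([0,T])`: it is of class `C^{m-1}` on `[0,T]` and
its `(m-1)`-st derivative is absolutely continuous, expressed via the fundamental
theorem of calculus with an integrable `m`-th derivative. -/
def MemW (m : ℕ) (T : ℝ) (u : ℝ → ℝ) : Prop :=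
  (∀ k < m, ContinuousOn (iteratedDeriv k u) (Icc 0 T)) ∧
  IntervalIntegrable (iteratedDeriv m u) volume 0 T ∧
  ∀ t ∈ Icc 0 T,
    iteratedDeriv (m - 1) u t
      = iteratedDeriv (m - 1) u 0 + ∫ s in (0:ℝ)..t, iteratedDeriv m u s

/-- The `2n`-th order linear differential operator
`L u = u^{(2n)} + a_{2n-1} u^{(2n-1)} + ⋯ + a_1 u' + a_0 u`. -/
noncomputable def Lop (n : ℕ) (a : ℕ → ℝ → ℝ) (u : ℝ → ℝ) (t : ℝ) : ℝ :=
  iteratedDeriv (2 * n) u t + ∑ k ∈ Finset.range (2 * n), a k t * iteratedDeriv k u t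

/-- Neumann space on `[0,T]`. -/
def XN (n : ℕ) (T : ℝ) : Set (ℝ → ℝ) :=
  {u | MemW (2 * n) T u ∧ ∀ k < n,
    iteratedDeriv (2 * k + 1) u 0 = 0 ∧ iteratedDeriv (2 * k + 1) u T = 0}

/-- Dirichlet space on `[0,T]`. -/
def XD (n : ℕ) (T : ℝ) : Set (ℝ → ℝ) :=
  {u | MemW (2 * n) T u ∧ ∀ k < n,
    iteratedDeriv (2 * k) u 0 = 0 ∧ iteratedDeriv (2 * k) u T = 0}

/-- Mixed space 1 on `[0,T]`. -/
def XM1 (n : ℕ) (T : ℝ) : Set (ℝ → ℝ) :=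
  {u | MemW (2 * n) T u ∧ ∀ k < n,
    iteratedDeriv (2 * k + 1) u 0 = 0 ∧ iteratedDeriv (2 * k) u T = 0}

/-- Mixed space 2 on `[0,T]`. -/
def XM2 (n : ℕ) (T : ℝ) : Set (ℝ → ℝ) :=
  {u | MemW (2 * n) T u ∧ ∀ k < n,
    iteratedDeriv (2 * k) u 0 = 0 ∧ iteratedDeriv (2 * k + 1) u T = 0}

/-- Periodic space on `[0,T]`. -/
def XP (n : ℕ) (T : ℝ) : Set (ℝ → ℝ) :=
  {u | MemW (2 * n) T u ∧ ∀ k < 2 * n, iteratedDeriv k u 0 = iteratedDeriv k u T}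

/-- Antiperiodic space on `[0,T]`. -/
def XA (n : ℕ) (T : ℝ) : Set (ℝ → ℝ) :=
  {u | MemW (2 * n) T u ∧ ∀ k < 2 * n, iteratedDeriv k u 0 = -iteratedDeriv k u T}

/-- The operator `Lop n a` is nonresonant in `X`: the only solution in `X` of the
homogeneous equation (a.e. on `[0,T]`) is the trivial one. -/
def Nonresonant (n : ℕ) (a : ℕ → ℝ → ℝ) (T : ℝ) (X : Set (ℝ → ℝ)) : Prop :=
  ∀ u ∈ X, (∀ᵐ t ∂volume, t ∈ Icc 0 T → Lop n a u t = 0) →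
    ∀ t ∈ Icc 0 T, u t = 0

/-- `G` is the Green's function of `(Lop n a, X)` on `[0,T]`: it is continuous on the
square and, for every `σ ∈ L¹(0,T)`, `t ↦ ∫₀ᵀ G t s σ s ds` is the unique solution in
`X` of `L u = σ` a.e. on `[0,T]`. -/
def IsGreen (n : ℕ) (a : ℕ → ℝ → ℝ) (T : ℝ) (X : Set (ℝ → ℝ)) (G : ℝ → ℝ → ℝ) : Prop :=
  ContinuousOn (fun p : ℝ × ℝ => G p.1 p.2) (Icc 0 T ×ˢ Icc 0 T) ∧
  ∀ σ : ℝ → ℝ, IntervalIntegrable σ volume 0 T →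
    ((fun t => ∫ s in (0:ℝ)..T, G t s * σ s) ∈ X ∧
     (∀ᵐ t ∂volume, t ∈ Icc 0 T →
        Lop n a (fun t' => ∫ s in (0:ℝ)..T, G t' s * σ s) t = σ t) ∧
     ∀ v ∈ X, (∀ᵐ t ∂volume, t ∈ Icc 0 T → Lop n a v t = σ t) →
       ∀ t ∈ Icc 0 T, v t = ∫ s in (0:ℝ)..T, G t s * σ s)

/-- Coefficients of the extended operator `L̃` on `[0,2T]`: the even-order coefficients
are extended evenly about `t = T`, the odd-order ones oddly. -/
noncomputable def tildeCoef (T : ℝ) (a : ℕ → ℝ → ℝ) : ℕ → ℝ → ℝ :=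
  fun k t => if t ≤ T then a k t else (-1 : ℝ) ^ k * a k (2 * T - t)

/-- Coefficients of the reflected operator `Ľ`:
`Ľ u = u^{(2n)} + Σ (-1)^k a_k(T - t) u^{(k)}`. -/
noncomputable def checkCoef (T : ℝ) (a : ℕ → ℝ → ℝ) : ℕ → ℝ → ℝ :=
  fun k t => (-1 : ℝ) ^ k * a k (T - t)

/-- `u` is an eigenfunction of `Lop n a` in `X` associated to the eigenvalue `lam`:
`u ∈ X`, `u` is not identically zero on `[0,T]`, and `L u + lam u = 0` a.e. on `[0,T]`. -/
def IsEigenfun (n : ℕ) (a : ℕ → ℝ → ℝ) (T : ℝ) (X : Set (ℝ → ℝ)) (lam : ℝ)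
    (u : ℝ → ℝ) : Prop :=
  u ∈ X ∧ (∃ t ∈ Icc 0 T, u t ≠ 0) ∧
  ∀ᵐ t ∂volume, t ∈ Icc 0 T → Lop n a u t + lam * u t = 0

/-- The set of eigenvalues (the spectrum) of `Lop n a` in `X`. -/
def SpecSet (n : ℕ) (a : ℕ → ℝ → ℝ) (T : ℝ) (X : Set (ℝ → ℝ)) : Set ℝ :=
  {lam | ∃ u, IsEigenfun n a T X lam u}

/-- `lam0` is the smallest eigenvalue of `Lop n a` in `X`, it is simple (its
eigenfunctions form a one-dimensional space), and it admits an eigenfunction which is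
strictly positive on the interior of the interval. -/
def IsPrincipal (n : ℕ) (a : ℕ → ℝ → ℝ) (T : ℝ) (X : Set (ℝ → ℝ)) (lam0 : ℝ) : Prop :=
  lam0 ∈ SpecSet n a T X ∧
  (∀ mu ∈ SpecSet n a T X, lam0 ≤ mu) ∧
  (∀ u v, IsEigenfun n a T X lam0 u → IsEigenfun n a T X lam0 v →
      ∃ c : ℝ, ∀ t ∈ Icc 0 T, v t = c * u t) ∧
  ∃ u, IsEigenfun n a T X lam0 u ∧ ∀ t ∈ Ioo 0 T, 0 < u t



lemma iteratedDeriv_reflect (k : ℕ) (f : ℝ → ℝ) (c : ℝ) :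
    iteratedDeriv k (fun t => f (c - t)) = fun x => (-1:ℝ)^k * iteratedDeriv k f (c - x) := by
  have h : (fun t : ℝ => f (c - t)) = fun t : ℝ => (fun z => f (c + z)) (-t) := by
    funext t; simp [sub_eq_add_neg]
  funext x
  rw [h, iteratedDeriv_comp_neg k (fun z => f (c + z)) x, iteratedDeriv_comp_const_add]
  simp [smul_eq_mul, sub_eq_add_neg]

lemma ae_reflect (c : ℝ) {P : ℝ → Prop} (h : ∀ᵐ t ∂(volume : Measure ℝ), P t) :
    ∀ᵐ t ∂(volume : Measure ℝ), P (c - t) :=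
  (Measure.measurePreserving_sub_left volume c).quasiMeasurePreserving.ae h

lemma ae_ne_real (T : ℝ) : ∀ᵐ t ∂(volume : Measure ℝ), t ≠ T := by
  rw [Filter.Eventually, mem_ae_iff]
  have : {t : ℝ | t ≠ T}ᶜ = {T} := by ext x; simp
  rw [this]; exact Real.volume_singleton

lemma dbr {α β : ℝ} (hab : α < β) {g : ℝ → ℝ} (hg : ContinuousOn g (Icc α β))
    (h0 : (∫ s in α..β, g s * g s) = 0) : ∀ s ∈ Icc α β, g s = 0 := by
  have hgi : IntervalIntegrable (fun s => g s * g s) volume α β :=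
    (hg.mul hg).intervalIntegrable_of_Icc hab.le
  have hnn : 0 ≤ᵐ[volume.restrict (Ioc α β)] fun s => g s * g s :=
    Filter.Eventually.of_forall fun s => mul_self_nonneg _
  have h2 := (intervalIntegral.integral_eq_zero_iff_of_le_of_nonneg_ae hab.le hnn hgi).mp h0
  have h3 : g =ᵐ[volume.restrict (Icc α β)] 0 := by
    rw [← Measure.restrict_congr_set Ioc_ae_eq_Icc]
    filter_upwards [h2] with s hs
    exact mul_self_eq_zero.mp hs
  exact fun s hs => Measure.eqOn_Icc_of_ae_eq volume hab.ne h3 hg continuousOn_const hs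

lemma memW_reflect {m : ℕ} (hm : 1 ≤ m) {c : ℝ} (hc : 0 ≤ c) {u : ℝ → ℝ}
    (hu : MemW m c u) : MemW m c (fun t => u (c - t)) := by
  obtain ⟨j, rfl⟩ : ∃ j, m = j + 1 := ⟨m - 1, (Nat.succ_pred_eq_of_pos hm).symm⟩
  obtain ⟨hcont, hint, hftc⟩ := hu
  have hmap : MapsTo (fun x : ℝ => c - x) (Icc 0 c) (Icc 0 c) := fun x hx =>
    ⟨by simp only [mem_Icc] at hx ⊢; linarith [hx.2], by simp only [mem_Icc] at hx ⊢; linarith [hx.1]⟩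
  refine ⟨?_, ?_, ?_⟩
  · intro k hk
    rw [iteratedDeriv_reflect]
    exact continuousOn_const.mul
      (((hcont k hk).comp (continuousOn_const.sub continuousOn_id) hmap))
  · rw [iteratedDeriv_reflect]
    have h2 := (hint.comp_sub_left c).symm
    simp only [sub_zero, sub_self] at h2
    exact h2.const_mul ((-1:ℝ)^(j+1))
  · intro t ht
    have hct : c - t ∈ Icc 0 c := hmap ht
    simp only [Nat.add_sub_cancel]
    simp only [iteratedDeriv_reflect]
    have h1 : IntervalIntegrable (iteratedDeriv (j+1) u) volume 0 (c - t) :=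
      hint.mono_set (by
        rw [uIcc_of_le hct.1, uIcc_of_le hc]
        exact Icc_subset_Icc le_rfl hct.2)
    have h2 : IntervalIntegrable (iteratedDeriv (j+1) u) volume (c - t) c :=
      hint.mono_set (by
        rw [uIcc_of_le hct.2, uIcc_of_le hc]
        exact Icc_subset_Icc hct.1 le_rfl)
    have hadd := intervalIntegral.integral_add_adjacent_intervals h1 h2
    have e1 := hftc c (right_mem_Icc.mpr hc)
    have e2 := hftc (c - t) hct
    simp only [Nat.add_sub_cancel] at e1 e2
    have hsub : (∫ s in (0:ℝ)..t, iteratedDeriv (j+1) u (c - s))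
        = ∫ s in (c-t)..c, iteratedDeriv (j+1) u s := by
      have h3 := intervalIntegral.integral_comp_sub_left (a := (0:ℝ)) (b := t)
        (fun s => iteratedDeriv (j+1) u s) c
      simpa using h3
    rw [intervalIntegral.integral_const_mul, hsub]
    have h4 : (∫ s in (c-t)..c, iteratedDeriv (j+1) u s)
        = iteratedDeriv j u c - iteratedDeriv j u (c - t) := by linarith
    rw [h4, sub_zero, pow_succ]
    ring

lemma tildeCoef_reflect (T : ℝ) (a : ℕ → ℝ → ℝ) (k : ℕ) {t : ℝ} (ht : t ≠ T) :
    tildeCoef T a k (2*T - t) = (-1:ℝ)^k * tildeCoef T a k t := by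
  rcases lt_or_gt_of_ne ht with h | h
  · have h1 : ¬(2*T - t ≤ T) := by intro hh; linarith
    have h2 : t ≤ T := h.le
    simp only [tildeCoef, if_neg h1, if_pos h2]
    rw [show 2*T - (2*T - t) = t by ring]
  · have h1 : 2*T - t ≤ T := by linarith
    have h2 : ¬(t ≤ T) := not_le.mpr h
    simp only [tildeCoef, if_pos h1, if_neg h2]
    rw [← mul_assoc, ← mul_pow]
    norm_num

lemma lop_reflect (n : ℕ) (a : ℕ → ℝ → ℝ) (T : ℝ) (u : ℝ → ℝ) {t : ℝ} (ht : t ≠ T) :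
    Lop n (tildeCoef T a) (fun x => u (2*T - x)) t = Lop n (tildeCoef T a) u (2*T - t) := by
  unfold Lop
  simp only [iteratedDeriv_reflect]
  congr 1
  · rw [pow_mul]; norm_num
  · refine Finset.sum_congr rfl fun k _ => ?_
    rw [tildeCoef_reflect T a k ht]
    ring

lemma xd_reflect (n : ℕ) (hn : 1 ≤ n) (T : ℝ) (hT : 0 < T) {u : ℝ → ℝ}
    (hu : u ∈ XD n (2*T)) : (fun x => u (2*T - x)) ∈ XD n (2*T) := by
  obtain ⟨hW, hbc⟩ := hu
  refine ⟨memW_reflect (by omega) (by linarith) hW, fun k hk => ?_⟩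
  simp only [iteratedDeriv_reflect]
  constructor
  · rw [sub_zero, (hbc k hk).2]; ring
  · rw [sub_self, (hbc k hk).1]; ring

lemma cont_slice {G : ℝ → ℝ → ℝ} {A B : Set ℝ}
    (hG : ContinuousOn (fun p : ℝ × ℝ => G p.1 p.2) (A ×ˢ B)) {t : ℝ} (ht : t ∈ A)
    {φ : ℝ → ℝ} (hφ : Continuous φ) {S : Set ℝ} (hmaps : ∀ s ∈ S, φ s ∈ B) :
    ContinuousOn (fun s => G t (φ s)) S := by
  have := hG.comp ((continuous_const.prodMk hφ).continuousOn (s := S))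
    (fun s hs => mk_mem_prod ht (hmaps s hs))
  exact this

lemma green_reflect (n : ℕ) (hn : 1 ≤ n) (T : ℝ) (hT : 0 < T) (a : ℕ → ℝ → ℝ)
    (GD2 : ℝ → ℝ → ℝ)
    (hGD2 : IsGreen n (tildeCoef T a) (2*T) (XD n (2*T)) GD2)
    (σ : ℝ → ℝ) (hσ : IntervalIntegrable σ volume 0 (2*T)) :
    ∀ t ∈ Icc 0 (2*T), (∫ s in (0:ℝ)..(2*T), GD2 t s * σ s)
      = ∫ s in (0:ℝ)..(2*T), GD2 (2*T - t) s * σ (2*T - s) := by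
  have hτ : IntervalIntegrable (fun s => σ (2*T - s)) volume 0 (2*T) := by
    have h := (hσ.comp_sub_left (2*T)).symm
    simpa using h
  obtain ⟨hmem, heq, _⟩ := hGD2.2 (fun s => σ (2*T - s)) hτ
  obtain ⟨_, _, huniq⟩ := hGD2.2 σ hσ
  have hwXD : (fun x => (fun t => ∫ s in (0:ℝ)..(2*T), GD2 t s * σ (2*T - s)) (2*T - x))
      ∈ XD n (2*T) := xd_reflect n hn T hT hmem
  have hrefl := ae_reflect (2*T) heq
  have hweq : ∀ᵐ t ∂(volume : Measure ℝ), t ∈ Icc 0 (2*T) →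
      Lop n (tildeCoef T a)
        (fun x => (fun t => ∫ s in (0:ℝ)..(2*T), GD2 t s * σ (2*T - s)) (2*T - x)) t
        = σ t := by
    filter_upwards [hrefl, ae_ne_real T] with t h1 h2 ht
    have hct : 2*T - t ∈ Icc 0 (2*T) := by
      simp only [mem_Icc] at ht ⊢; constructor <;> linarith [ht.1, ht.2]
    have h3 := h1 hct
    have h4 := lop_reflect n a T
      (fun t' => ∫ s in (0:ℝ)..(2*T), GD2 t' s * σ (2*T - s)) h2
    exact h4.trans (h3.trans (by rw [show 2*T - (2*T - t) = t by ring]))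
  intro t ht
  have h5 := huniq _ hwXD hweq t ht
  exact h5.symm

lemma kernel_symm (n : ℕ) (hn : 1 ≤ n) (T : ℝ) (hT : 0 < T) (a : ℕ → ℝ → ℝ)
    (GD2 : ℝ → ℝ → ℝ)
    (hGD2 : IsGreen n (tildeCoef T a) (2*T) (XD n (2*T)) GD2) :
    ∀ t ∈ Icc 0 (2*T), ∀ s ∈ Icc 0 (2*T), GD2 t s = GD2 (2*T - t) (2*T - s) := by
  intro t ht
  have hc2 : (0:ℝ) < 2*T := by linarith
  have hmapsid : ∀ s ∈ Icc (0:ℝ) (2*T), s ∈ Icc (0:ℝ) (2*T) := fun s hs => hs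
  have hmapsref : ∀ s ∈ Icc (0:ℝ) (2*T), 2*T - s ∈ Icc (0:ℝ) (2*T) := fun s hs => by
    simp only [mem_Icc] at hs ⊢; constructor <;> linarith [hs.1, hs.2]
  have hct : 2*T - t ∈ Icc (0:ℝ) (2*T) := hmapsref t ht
  have hcont1 : ContinuousOn (fun s => GD2 t s) (Icc 0 (2*T)) :=
    cont_slice hGD2.1 ht continuous_id hmapsid
  have hcont2 : ContinuousOn (fun s => GD2 (2*T - t) (2*T - s)) (Icc 0 (2*T)) :=
    cont_slice hGD2.1 hct (continuous_const.sub continuous_id) hmapsref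
  set g : ℝ → ℝ := fun s => GD2 t s - GD2 (2*T - t) (2*T - s) with hgdef
  have hg : ContinuousOn g (Icc 0 (2*T)) := hcont1.sub hcont2
  have hσ : IntervalIntegrable g volume 0 (2*T) := hg.intervalIntegrable_of_Icc hc2.le
  have h1 := green_reflect n hn T hT a GD2 hGD2 g hσ t ht
  have h2 : (∫ s in (0:ℝ)..2*T, GD2 (2*T - t) s * g (2*T - s))
      = ∫ s in (0:ℝ)..2*T, GD2 (2*T - t) (2*T - s) * g s := by
    have h3 := intervalIntegral.integral_comp_sub_left (a := (0:ℝ)) (b := 2*T)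
      (fun x => GD2 (2*T - t) (2*T - x) * g x) (2*T)
    simp only [sub_sub_cancel, sub_self, sub_zero] at h3
    exact h3
  have hgu : ContinuousOn g (uIcc 0 (2*T)) := by rwa [uIcc_of_le hc2.le]
  have hcont1u : ContinuousOn (fun s => GD2 t s) (uIcc 0 (2*T)) := by
    rwa [uIcc_of_le hc2.le]
  have hcont2u : ContinuousOn (fun s => GD2 (2*T - t) (2*T - s)) (uIcc 0 (2*T)) := by
    rwa [uIcc_of_le hc2.le]
  have hi1 : IntervalIntegrable (fun s => GD2 t s * g s) volume 0 (2*T) :=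
    hσ.continuousOn_mul hcont1u
  have hi2 : IntervalIntegrable (fun s => GD2 (2*T - t) (2*T - s) * g s) volume 0 (2*T) :=
    hσ.continuousOn_mul hcont2u
  have h3 : (∫ s in (0:ℝ)..2*T, g s * g s) = 0 := by
    have h4 : (∫ s in (0:ℝ)..2*T, g s * g s)
        = (∫ s in (0:ℝ)..2*T, GD2 t s * g s)
          - ∫ s in (0:ℝ)..2*T, GD2 (2*T - t) (2*T - s) * g s := by
      rw [← intervalIntegral.integral_sub hi1 hi2]
      apply intervalIntegral.integral_congr
      intro s _
      simp only [hgdef]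
      ring
    rw [h4, h1, h2, sub_self]
  have h5 := dbr hc2 hg h3
  intro s hs
  have := h5 s hs
  simp only [hgdef] at this
  linarith [this]

theorem green_mixed2_dirichlet (n : ℕ) (hn : 1 ≤ n) (T : ℝ) (hT : 0 < T)
    (a : ℕ → ℝ → ℝ) (ha : ∀ k < 2 * n, IntervalIntegrable (a k) volume 0 T)
    (GM2 GD2 : ℝ → ℝ → ℝ)
    (hM2res : Nonresonant n a T (XM2 n T))
    (hGM2 : IsGreen n a T (XM2 n T) GM2)
    (hD2res : Nonresonant n (tildeCoef T a) (2 * T) (XD n (2 * T)))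
    (hGD2 : IsGreen n (tildeCoef T a) (2 * T) (XD n (2 * T)) GD2) :
    ∀ t ∈ Icc 0 T, ∀ s ∈ Icc 0 T,
      GM2 t s = GD2 t s + GD2 (2 * T - t) s := by
  intro t ht
  have hc2 : (0:ℝ) < 2*T := by linarith
  have hTle : T ≤ 2*T := by linarith
  have htc : t ∈ Icc (0:ℝ) (2*T) := ⟨ht.1, le_trans ht.2 hTle⟩
  have hmapsT : ∀ s' ∈ Icc (0:ℝ) T, 2*T - s' ∈ Icc (0:ℝ) (2*T) := fun s' hs' => by
    simp only [mem_Icc] at hs' ⊢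
    constructor <;> linarith [hs'.1, hs'.2]
  -- Key identity: for every integrable σ on [0,T],
  -- ∫ GM2 t s σ s = ∫ (GD2 t s + GD2 t (2T-s)) σ s.
  have key : ∀ σ : ℝ → ℝ, IntervalIntegrable σ volume 0 T →
      (∫ s in (0:ℝ)..T, GM2 t s * σ s)
        = ∫ s in (0:ℝ)..T, (GD2 t s + GD2 t (2*T - s)) * σ s := by
    intro σ hσ
    set f : ℝ → ℝ := fun s => if s ≤ T then σ s else σ (2*T - s) with hfdef
    have hfeven : ∀ s, f (2*T - s) = f s := by
      intro s
      rcases lt_trichotomy s T with h | h | h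
      · have h1 : ¬(2*T - s ≤ T) := by intro hh; linarith
        simp only [hfdef, if_neg h1, if_pos h.le, show 2*T - (2*T - s) = s by ring]
      · subst h
        rw [show 2*s - s = s by ring]
      · have h1 : 2*T - s ≤ T := by linarith
        have h2 : ¬(s ≤ T) := not_le.mpr h
        simp only [hfdef, if_pos h1, if_neg h2]
    have hf1 : IntervalIntegrable f volume 0 T := by
      rw [intervalIntegrable_iff, uIoc_of_le hT.le] at hσ ⊢
      exact hσ.congr_fun (fun s hs => (if_pos hs.2).symm) measurableSet_Ioc
    have hf2 : IntervalIntegrable f volume T (2*T) := by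
      have h2 : IntervalIntegrable (fun x => σ (2*T - x)) volume (2*T) T := by
        have h3 := hσ.comp_sub_left (2*T)
        rw [sub_zero, show 2*T - T = T by ring] at h3
        exact h3
      rw [intervalIntegrable_iff] at h2 ⊢
      rw [uIoc_comm, uIoc_of_le hTle] at h2
      rw [uIoc_of_le hTle]
      exact h2.congr_fun (fun s hs => (if_neg (not_le.mpr hs.1)).symm) measurableSet_Ioc
    have hfI : IntervalIntegrable f volume 0 (2*T) := hf1.trans hf2
    obtain ⟨humem, hueq, _⟩ := hGD2.2 f hfI
    set u : ℝ → ℝ := fun t' => ∫ s in (0:ℝ)..(2*T), GD2 t' s * f s with hudef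
    have husym : ∀ x ∈ Icc (0:ℝ) (2*T), u x = u (2*T - x) := by
      intro x hx
      have h1 := green_reflect n hn T hT a GD2 hGD2 f hfI x hx
      show (∫ s in (0:ℝ)..(2*T), GD2 x s * f s)
          = ∫ s in (0:ℝ)..(2*T), GD2 (2*T - x) s * f s
      rw [h1]
      apply intervalIntegral.integral_congr
      intro s _
      show GD2 (2*T - x) s * f (2*T - s) = GD2 (2*T - x) s * f s
      rw [hfeven s]
    obtain ⟨huW, hubc⟩ := humem
    have huMemT : MemW (2*n) T u := by
      obtain ⟨hcont, hint, hftc⟩ := huW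
      refine ⟨fun k hk => (hcont k hk).mono (Icc_subset_Icc le_rfl hTle),
        hint.mono_set (by
          rw [uIcc_of_le hT.le, uIcc_of_le hc2.le]
          exact Icc_subset_Icc le_rfl hTle),
        fun x hx => hftc x ⟨hx.1, le_trans hx.2 hTle⟩⟩
    have hoddT : ∀ k < n, iteratedDeriv (2*k+1) u T = 0 := by
      intro k hk
      have hnbhd : Icc (0:ℝ) (2*T) ∈ nhds T := Icc_mem_nhds hT (by linarith)
      have hev : u =ᶠ[nhds T] (fun x => u (2*T - x)) := by
        filter_upwards [hnbhd] with x hx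
        exact husym x hx
      have h1 := Filter.EventuallyEq.iteratedDeriv_eq (2*k+1) hev
      simp only [iteratedDeriv_reflect] at h1
      rw [show 2*T - T = T by ring] at h1
      have h2 : (-1:ℝ)^(2*k+1) = -1 := by
        rw [pow_succ, pow_mul]; norm_num
      rw [h2] at h1
      linarith
    have huXM2 : u ∈ XM2 n T := ⟨huMemT, fun k hk => ⟨(hubc k hk).1, hoddT k hk⟩⟩
    have hueqT : ∀ᵐ x ∂(volume : Measure ℝ), x ∈ Icc 0 T → Lop n a u x = σ x := by
      filter_upwards [hueq] with x hx hxT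
      have hx2 : x ∈ Icc (0:ℝ) (2*T) := ⟨hxT.1, le_trans hxT.2 hTle⟩
      have h1 := hx hx2
      have h2 : f x = σ x := if_pos hxT.2
      rw [h2] at h1
      rw [← h1]
      unfold Lop
      congr 1
      apply Finset.sum_congr rfl
      intro k _
      congr 1
      simp only [tildeCoef, if_pos hxT.2]
    obtain ⟨_, _, hMuniq⟩ := hGM2.2 σ hσ
    have hval := hMuniq u huXM2 hueqT t ht
    have hGD2tcont : ContinuousOn (fun s => GD2 t s) (uIcc 0 (2*T)) := by
      rw [uIcc_of_le hc2.le]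
      exact cont_slice hGD2.1 htc continuous_id (fun s hs => hs)
    have hprod : IntervalIntegrable (fun s => GD2 t s * f s) volume 0 (2*T) :=
      hfI.continuousOn_mul hGD2tcont
    have hp1 : IntervalIntegrable (fun s => GD2 t s * f s) volume 0 T :=
      hprod.mono_set (by
        rw [uIcc_of_le hT.le, uIcc_of_le hc2.le]
        exact Icc_subset_Icc le_rfl hTle)
    have hp2 : IntervalIntegrable (fun s => GD2 t s * f s) volume T (2*T) :=
      hprod.mono_set (by
        rw [uIcc_of_le hTle, uIcc_of_le hc2.le]
        exact Icc_subset_Icc hT.le le_rfl)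
    have hsplit := intervalIntegral.integral_add_adjacent_intervals hp1 hp2
    have hseg1 : (∫ s in (0:ℝ)..T, GD2 t s * f s) = ∫ s in (0:ℝ)..T, GD2 t s * σ s := by
      apply intervalIntegral.integral_congr
      intro s hs
      rw [uIcc_of_le hT.le] at hs
      simp only [hfdef, if_pos hs.2]
    have hseg2 : (∫ s in T..(2*T), GD2 t s * f s)
        = ∫ s in (0:ℝ)..T, GD2 t (2*T - s) * σ s := by
      have e1 : (∫ s in T..(2*T), GD2 t s * f s)
          = ∫ s in T..(2*T), GD2 t s * σ (2*T - s) := by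
        apply intervalIntegral.integral_congr
        intro s hs
        rw [uIcc_of_le hTle] at hs
        rcases eq_or_lt_of_le hs.1 with h | h
        · rw [← h]
          simp only [hfdef, if_pos le_rfl, show 2*T - T = T by ring]
        · simp only [hfdef, if_neg (not_le.mpr h)]
      have e2 := intervalIntegral.integral_comp_sub_left (a := T) (b := 2*T)
        (fun x => GD2 t (2*T - x) * σ x) (2*T)
      simp only [sub_sub_cancel, sub_self] at e2
      rw [show 2*T - T = T by ring] at e2
      exact e1.trans e2
    have hut : u t = (∫ s in (0:ℝ)..T, GD2 t s * σ s)
        + ∫ s in (0:ℝ)..T, GD2 t (2*T - s) * σ s := by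
      show (∫ s in (0:ℝ)..(2*T), GD2 t s * f s)
          = (∫ s in (0:ℝ)..T, GD2 t s * σ s) + ∫ s in (0:ℝ)..T, GD2 t (2*T - s) * σ s
      rw [← hsplit, hseg1, hseg2]
    have hq1 : IntervalIntegrable (fun s => GD2 t s * σ s) volume 0 T :=
      hσ.continuousOn_mul (by
        rw [uIcc_of_le hT.le]
        exact cont_slice hGD2.1 htc continuous_id (fun s hs => ⟨hs.1, le_trans hs.2 hTle⟩))
    have hq2 : IntervalIntegrable (fun s => GD2 t (2*T - s) * σ s) volume 0 T :=
      hσ.continuousOn_mul (by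
        rw [uIcc_of_le hT.le]
        exact cont_slice hGD2.1 htc (continuous_const.sub continuous_id) hmapsT)
    rw [← hval, hut, ← intervalIntegral.integral_add hq1 hq2]
    apply intervalIntegral.integral_congr
    intro s _
    ring
  -- Conclude pointwise using du Bois-Reymond and kernel symmetry
  intro s hs
  have hgm : ContinuousOn (fun s' => GM2 t s') (Icc 0 T) :=
    cont_slice hGM2.1 ht continuous_id (fun _ h => h)
  have hgd1 : ContinuousOn (fun s' => GD2 t s') (Icc 0 T) :=
    cont_slice hGD2.1 htc continuous_id (fun s' hs' => ⟨hs'.1, le_trans hs'.2 hTle⟩)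
  have hgd2 : ContinuousOn (fun s' => GD2 t (2*T - s')) (Icc 0 T) :=
    cont_slice hGD2.1 htc (continuous_const.sub continuous_id) hmapsT
  set g : ℝ → ℝ := fun s' => GM2 t s' - (GD2 t s' + GD2 t (2*T - s')) with hgdef
  have hgc : ContinuousOn g (Icc 0 T) := hgm.sub (hgd1.add hgd2)
  have hgi : IntervalIntegrable g volume 0 T := hgc.intervalIntegrable_of_Icc hT.le
  have hkey := key g hgi
  have hqa : IntervalIntegrable (fun s' => GM2 t s' * g s') volume 0 T :=
    hgi.continuousOn_mul (by rw [uIcc_of_le hT.le]; exact hgm)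
  have hqb : IntervalIntegrable (fun s' => (GD2 t s' + GD2 t (2*T - s')) * g s') volume 0 T :=
    hgi.continuousOn_mul (by rw [uIcc_of_le hT.le]; exact hgd1.add hgd2)
  have hz : (∫ s' in (0:ℝ)..T, g s' * g s') = 0 := by
    have h4 : (∫ s' in (0:ℝ)..T, g s' * g s')
        = (∫ s' in (0:ℝ)..T, GM2 t s' * g s')
          - ∫ s' in (0:ℝ)..T, (GD2 t s' + GD2 t (2*T - s')) * g s' := by
      rw [← intervalIntegral.integral_sub hqa hqb]
      apply intervalIntegral.integral_congr
      intro s' _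
      simp only [hgdef]
      ring
    rw [h4, hkey, sub_self]
  have hzero := dbr hT hgc hz s hs
  have hks := kernel_symm n hn T hT a GD2 hGD2 t htc (2*T - s)
    ⟨by simp only [mem_Icc] at hs ⊢; linarith [hs.2],
     by simp only [mem_Icc] at hs ⊢; linarith [hs.1]⟩
  rw [sub_sub_cancel] at hks
  simp only [hgdef] at hzero
  linarith
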